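/- Consider the same family of Lie algebras as above with t₁₁ = 0 and t₂₂ ≠ 0. Then the form Ω = β φ¹³_t + θ φ²⁴_t with β θ ≠ 0 is a closed (2,0)-form with Ω ∧ Ω ≠ 0, i.e., an invariant complex symplectic form. -/

import Mathlib

/-
STATEMENT 6: For the Lie algebra with (1,0)-forms satisfying
dφ¹ = dφ² = dφ⁴ = 0, dφ³ = -(1/(1-|t₂₂|²)) φ¹∧φ² + (t₂₂/(1-|t₂₂|²)) φ¹∧φ̄²
(the family of Statement 5 with t₁₁ = 0, t₂₂ ≠ 0, |t₂₂| < 1),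
the form Ω = β φ¹∧φ³ + θ φ²∧φ⁴ with β·θ ≠ 0 is a closed (2,0)-form with Ω∧Ω ≠ 0,
i.e. an invariant complex symplectic form.

Model: exterior algebra over ℂ on generators gen 0..3 = φ¹..φ⁴, gen 4..7 = φ̄¹..φ̄⁴;
d determined by the structure equations (and conjugates) and the Leibniz rule.
-/

noncomputable section

abbrev E := ExteriorAlgebra ℂ (Fin 8 → ℂ)

def gen (i : Fin 8) : E := ExteriorAlgebra.ι ℂ (Pi.single i 1)

def dgen (t22 : ℂ) : Fin 8 → E :=
  ![0, 0,
    (-(1 - (Complex.normSq t22 : ℂ))⁻¹) • (gen 0 * gen 1)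
      + (t22 * (1 - (Complex.normSq t22 : ℂ))⁻¹) • (gen 0 * gen 5),
    0, 0, 0,
    (-(1 - (Complex.normSq t22 : ℂ))⁻¹) • (gen 4 * gen 5)
      + ((starRingEnd ℂ) t22 * (1 - (Complex.normSq t22 : ℂ))⁻¹) • (gen 4 * gen 1),
    0]

def d2 (t22 : ℂ) (i j : Fin 8) : E := dgen t22 i * gen j - gen i * dgen t22 j

/-- Ω = β φ¹∧φ³ + θ φ²∧φ⁴. -/
def Om (b e : ℂ) : E := b • (gen 0 * gen 2) + e • (gen 1 * gen 3)

/-- dΩ, by linearity and the Leibniz rule. -/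
def dOm (t22 b e : ℂ) : E := b • d2 t22 0 2 + e • d2 t22 1 3

def proj : (Fin 8 → ℂ) →ₗ[ℂ] (Fin 4 → ℂ) := LinearMap.funLeft ℂ ℂ (Fin.castLE (by norm_num))
def F : (Fin 8 → ℂ) [⋀^Fin 4]→ₗ[ℂ] ℂ := Matrix.detRowAlternating.compLinearMap proj
def ff : ∀ i : ℕ, (Fin 8 → ℂ) [⋀^Fin i]→ₗ[ℂ] ℂ
  | 4 => F
  | _ => 0
def L : E →ₗ[ℂ] ℂ := ExteriorAlgebra.liftAlternating ff

lemma L_gen4 (i j k l : Fin 8) :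
    L (gen i * gen j * gen k * gen l)
      = Matrix.det (Matrix.of fun r c : Fin 4 =>
          (![Pi.single i 1, Pi.single j 1, Pi.single k 1, Pi.single l 1] : Fin 4 → Fin 8 → ℂ) r
            (Fin.castLE (by norm_num) c)) := by
  have h : gen i * gen j * gen k * gen l
      = ExteriorAlgebra.ιMulti ℂ 4 ![Pi.single i 1, Pi.single j 1, Pi.single k 1, Pi.single l 1] := by
    simp [ExteriorAlgebra.ιMulti_apply, gen, List.ofFn_succ, mul_assoc]
  rw [h, L, ExteriorAlgebra.liftAlternating_apply_ιMulti]
  rfl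


def Mrow (i j k l : Fin 8) : Matrix (Fin 4) (Fin 4) ℂ :=
  Matrix.of fun r c : Fin 4 =>
    (![Pi.single i 1, Pi.single j 1, Pi.single k 1, Pi.single l 1] : Fin 4 → Fin 8 → ℂ) r
      (Fin.castLE (by norm_num) c)

lemma det0213 : Matrix.det (Matrix.of fun r c : Fin 4 =>
    (![Pi.single 0 1, Pi.single 2 1, Pi.single 1 1, Pi.single 3 1] : Fin 4 → Fin 8 → ℂ) r
      (Fin.castLE (by norm_num) c)) = -1 := by
  simp [Matrix.det_succ_row_zero, Fin.sum_univ_succ, Pi.single_apply, Fin.succAbove]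

lemma det1302 : Matrix.det (Matrix.of fun r c : Fin 4 =>
    (![Pi.single 1 1, Pi.single 3 1, Pi.single 0 1, Pi.single 2 1] : Fin 4 → Fin 8 → ℂ) r
      (Fin.castLE (by norm_num) c)) = -1 := by
  simp [Matrix.det_succ_row_zero, Fin.sum_univ_succ, Pi.single_apply, Fin.succAbove]

lemma det0202 : Matrix.det (Matrix.of fun r c : Fin 4 =>
    (![Pi.single 0 1, Pi.single 2 1, Pi.single 0 1, Pi.single 2 1] : Fin 4 → Fin 8 → ℂ) r
      (Fin.castLE (by norm_num) c)) = 0 :=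
  Matrix.det_zero_of_row_eq (i := 0) (j := 2) (by decide) rfl

lemma det1313 : Matrix.det (Matrix.of fun r c : Fin 4 =>
    (![Pi.single 1 1, Pi.single 3 1, Pi.single 1 1, Pi.single 3 1] : Fin 4 → Fin 8 → ℂ) r
      (Fin.castLE (by norm_num) c)) = 0 :=
  Matrix.det_zero_of_row_eq (i := 0) (j := 2) (by decide) rfl

theorem stmt6 (t22 : ℂ) (ht0 : t22 ≠ 0) (ht : ‖t22‖ < 1)
    (b e : ℂ) (hbe : b * e ≠ 0) :
    dOm t22 b e = 0 ∧ Om b e * Om b e ≠ 0 := by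
  constructor
  · simp [dOm, d2, dgen, gen, mul_add, mul_smul_comm, ← mul_assoc,
      ExteriorAlgebra.ι_sq_zero]
  · intro hc
    have hL : L (Om b e * Om b e) = 0 := by rw [hc]; simp
    have hexp : Om b e * Om b e
        = (b*b) • (gen 0 * gen 2 * gen 0 * gen 2) + (b*e) • (gen 0 * gen 2 * gen 1 * gen 3)
          + (e*b) • (gen 1 * gen 3 * gen 0 * gen 2) + (e*e) • (gen 1 * gen 3 * gen 1 * gen 3) := by
      simp only [Om, add_mul, mul_add, smul_mul_assoc, mul_smul_comm, smul_add, smul_smul,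
        ← mul_assoc, mul_comm e b]
      abel
    rw [hexp] at hL
    simp only [map_add, map_smul, L_gen4] at hL
    rw [det0202, det0213, det1302, det1313] at hL
    simp only [smul_eq_mul, mul_zero, mul_neg_one, mul_neg, zero_add, add_zero] at hL
    have : (2 : ℂ) * (b * e) = 0 := by linear_combination -hL
    simp [hbe] at this

end
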